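/- A graph G is a cograph (i.e., constructible from single-vertex graphs by series and parallel compositions) if and only if G contains no induced path on four vertices. -/

import Mathlib

/-- `{a,b,c,d}` induces a path `a - b - c - d` on four vertices in `G`. -/
def IsInducedP4 {V : Type*} (G : SimpleGraph V) (a b c d : V) : Prop :=
  a ≠ b ∧ a ≠ c ∧ a ≠ d ∧ b ≠ c ∧ b ≠ d ∧ c ≠ d ∧
  G.Adj a b ∧ G.Adj b c ∧ G.Adj c d ∧ ¬ G.Adj a c ∧ ¬ G.Adj a d ∧ ¬ G.Adj b d

/-- `G` has no induced path on four vertices. -/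
def P4Free {V : Type*} (G : SimpleGraph V) : Prop := ∀ a b c d : V, ¬ IsInducedP4 G a b c d

open SimpleGraph in
/-- Graphs constructible from single-vertex graphs by parallel composition (disjoint
union `⊕g`) and series composition (disjoint union plus all cross edges, obtained here
as the complement of the disjoint union of the complements). -/
inductive IsCographAux : ∀ {W : Type}, SimpleGraph W → Prop
  | single : IsCographAux (⊥ : SimpleGraph PUnit)
  | parallel {W₁ W₂ : Type} {G₁ : SimpleGraph W₁} {G₂ : SimpleGraph W₂} :
      IsCographAux G₁ → IsCographAux G₂ → IsCographAux (G₁ ⊕g G₂)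
  | series {W₁ W₂ : Type} {G₁ : SimpleGraph W₁} {G₂ : SimpleGraph W₂} :
      IsCographAux G₁ → IsCographAux G₂ → IsCographAux ((G₁ᶜ ⊕g G₂ᶜ)ᶜ)

/-- `G` is a cograph: it is isomorphic to a graph constructible from single-vertex
graphs by series and parallel compositions. -/
def IsCograph {V : Type} (G : SimpleGraph V) : Prop :=
  ∃ (W : Type) (H : SimpleGraph W), IsCographAux H ∧ Nonempty (G ≃g H)

open SimpleGraph

namespace Scratch

lemma p4free_of_embedding {α β : Type*} {G : SimpleGraph α} {H : SimpleGraph β}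
    (f : G ↪g H) (h : P4Free H) : P4Free G := by
  rintro a b c d ⟨hab, hac, had, hbc, hbd, hcd, e1, e2, e3, n1, n2, n3⟩
  exact h (f a) (f b) (f c) (f d)
    ⟨fun h' => hab (f.injective h'), fun h' => hac (f.injective h'),
     fun h' => had (f.injective h'), fun h' => hbc (f.injective h'),
     fun h' => hbd (f.injective h'), fun h' => hcd (f.injective h'),
     f.map_rel_iff.mpr e1, f.map_rel_iff.mpr e2, f.map_rel_iff.mpr e3,
     fun h' => n1 (f.map_rel_iff.mp h'), fun h' => n2 (f.map_rel_iff.mp h'),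
     fun h' => n3 (f.map_rel_iff.mp h')⟩

lemma p4free_compl {α : Type*} {G : SimpleGraph α} (h : P4Free G) : P4Free Gᶜ := by
  rintro a b c d ⟨hab, hac, had, hbc, hbd, hcd, e1, e2, e3, n1, n2, n3⟩
  have g1 : G.Adj a c := by
    by_contra h'; exact n1 ⟨hac, h'⟩
  have g2 : G.Adj a d := by
    by_contra h'; exact n2 ⟨had, h'⟩
  have g3 : G.Adj b d := by
    by_contra h'; exact n3 ⟨hbd, h'⟩
  exact h b d a c ⟨hbd, Ne.symm hab, hbc, Ne.symm had, Ne.symm hcd, hac,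
    g3, g2.symm, g1, fun h' => e1.2 h'.symm, e2.2, fun h' => e3.2 h'.symm⟩


lemma p4free_sum {α β : Type*} {G : SimpleGraph α} {H : SimpleGraph β}
    (hG : P4Free G) (hH : P4Free H) : P4Free (G ⊕g H) := by
  rintro (a|a) (b|b) (c|c) (d|d) ⟨hab, hac, had, hbc, hbd, hcd, e1, e2, e3, n1, n2, n3⟩ <;>
    simp only [SimpleGraph.sum_adj] at e1 e2 e3 n1 n2 n3 <;>
    first
    | exact e1.elim
    | exact e2.elim
    | exact e3.elim
    | exact hG a b c d ⟨fun h' => hab (congrArg _ h'), fun h' => hac (congrArg _ h'),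
        fun h' => had (congrArg _ h'), fun h' => hbc (congrArg _ h'),
        fun h' => hbd (congrArg _ h'), fun h' => hcd (congrArg _ h'), e1, e2, e3, n1, n2, n3⟩
    | exact hH a b c d ⟨fun h' => hab (congrArg _ h'), fun h' => hac (congrArg _ h'),
        fun h' => had (congrArg _ h'), fun h' => hbc (congrArg _ h'),
        fun h' => hbd (congrArg _ h'), fun h' => hcd (congrArg _ h'), e1, e2, e3, n1, n2, n3⟩

lemma mem_of_reachable {α : Type*} {G : SimpleGraph α} {T : Set α}
    (hT : ∀ a b, a ∈ T → G.Adj a b → b ∈ T) {x y : α} (hx : x ∈ T) (h : G.Reachable x y) :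
    y ∈ T := by
  obtain ⟨w⟩ := h
  induction w with
  | nil => exact hx
  | cons h' p ih => exact ih (hT _ _ hx h')

lemma eq_of_isolated {α : Type*} {G : SimpleGraph α} {v w : α}
    (h : ∀ x, ¬ G.Adj v x) (hr : G.Reachable v w) : v = w := by
  obtain ⟨p⟩ := hr
  cases p with
  | nil => rfl
  | cons h' p => exact absurd h' (h _)

lemma exists_transition {α : Type*} {G : SimpleGraph α} (P : α → Prop) {x y : α}
    (w : G.Walk x y) (hx : P x) (hy : ¬ P y) :
    ∃ p q, G.Adj p q ∧ P p ∧ ¬ P q ∧ G.Reachable x p := by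
  induction w with
  | nil => exact absurd hx hy
  | @cons x z y h w ih =>
    by_cases hz : P z
    · obtain ⟨p, q, h1, h2, h3, h4⟩ := ih hz hy
      exact ⟨p, q, h1, h2, h3, (h.reachable).trans h4⟩
    · exact ⟨x, z, h, hx, hz, Reachable.refl x⟩


lemma compl_induce {α : Type*} (G : SimpleGraph α) (S : Set α) :
    (G.induce S)ᶜ = Gᶜ.induce S := by
  ext a b
  simp [compl_adj, Subtype.ext_iff]

lemma core {α : Type*} {G : SimpleGraph α} (hP : P4Free G) (hG : G.Connected)
    (hGc : Gᶜ.Connected) (v : α)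
    (hab : ∃ a b : ↥{u : α | u ≠ v}, ¬ (G.induce {u : α | u ≠ v}).Reachable a b) : False := by
  set S : Set α := {u : α | u ≠ v} with hSdef
  set H := G.induce S with hHdef
  have hHadj : ∀ a b : ↥S, H.Adj a b ↔ G.Adj ↑a ↑b := fun a b => Iff.rfl
  have claimA : ∀ u : ↥S, ∃ u' : ↥S, H.Reachable u u' ∧ G.Adj v ↑u' := by
    intro u
    by_contra hcon
    push_neg at hcon
    set T : Set α := {w | ∃ h : w ∈ S, H.Reachable u ⟨w, h⟩} with hT
    have hclosed : ∀ a b, a ∈ T → G.Adj a b → b ∈ T := by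
      rintro a b ⟨ha, hra⟩ hadj'
      have hb : b ∈ S := fun hbv => hcon ⟨a, ha⟩ hra ((hbv ▸ hadj' : G.Adj a v)).symm
      exact ⟨hb, hra.trans (SimpleGraph.Adj.reachable ((hHadj ⟨a, ha⟩ ⟨b, hb⟩).mpr hadj'))⟩
    have huT : (u : α) ∈ T := ⟨u.2, by exact Reachable.refl u⟩
    obtain ⟨hv, -⟩ := mem_of_reachable hclosed huT (hG.preconnected ↑u v)
    exact hv rfl
  have claimB : ∃ u₀ : ↥S, ¬ G.Adj v ↑u₀ := by
    by_contra hcon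
    push_neg at hcon
    obtain ⟨a, b, hnr⟩ := hab
    have hiso : ∀ x, ¬ Gᶜ.Adj v x := by
      intro x hx
      rcases eq_or_ne x v with h | h
      · exact hx.ne h.symm
      · exact hx.2 (hcon ⟨x, h⟩)
    exact a.2 (eq_of_isolated hiso (hGc.preconnected v ↑a)).symm
  obtain ⟨a, b, hnr⟩ := hab
  obtain ⟨u₀, hu₀⟩ := claimB
  have hc : ∃ c : ↥S, ¬ H.Reachable u₀ c := by
    by_contra h'
    push_neg at h'
    exact hnr ((h' a).symm.trans (h' b))
  obtain ⟨c, hcr⟩ := hc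
  obtain ⟨w, hwc, hwv⟩ := claimA c
  obtain ⟨x₀, hx₀r, hx₀v⟩ := claimA u₀
  obtain ⟨wk⟩ := hx₀r.symm
  obtain ⟨p, q, hpq, hpv, hqv, hxp⟩ :=
    exists_transition (fun s : ↥S => G.Adj v ↑s) wk hx₀v hu₀
  have hp : H.Reachable u₀ p := hx₀r.trans hxp
  have hq : H.Reachable u₀ q := hp.trans hpq.reachable
  have hqw : ¬ H.Reachable q w := fun h => hcr ((hq.trans h).trans hwc.symm)
  have hpw : ¬ H.Reachable p w := fun h => hcr ((hp.trans h).trans hwc.symm)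
  have hGqw : ¬ G.Adj ↑q ↑w := fun h => hqw (SimpleGraph.Adj.reachable ((hHadj q w).mpr h))
  have hGpw : ¬ G.Adj ↑p ↑w := fun h => hpw (SimpleGraph.Adj.reachable ((hHadj p w).mpr h))
  exact hP ↑q ↑p v ↑w
    ⟨Subtype.coe_ne_coe.mpr hpq.ne', q.2,
     Subtype.coe_ne_coe.mpr (fun h => hqw (h ▸ Reachable.refl q)), p.2,
     Subtype.coe_ne_coe.mpr (fun h => hpw (h ▸ Reachable.refl p)), Ne.symm w.2,
     ((hHadj p q).mp hpq).symm, hpv.symm, hwv,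
     fun h => hqv h.symm, hGqw, hGpw⟩


lemma not_connected_exists {α : Type*} [Nonempty α] {G : SimpleGraph α}
    (h : ¬ G.Connected) : ∃ a b : α, ¬ G.Reachable a b := by
  rw [SimpleGraph.connected_iff] at h
  push_neg at h
  by_contra hre
  push_neg at hre
  exact not_isEmpty_of_nonempty α (h (fun a b => hre a b))

lemma key : ∀ (n : ℕ) (α : Type) [Finite α], Nat.card α = n → 2 ≤ n →
    ∀ G : SimpleGraph α, P4Free G → G.Connected → Gᶜ.Connected → False := by
  intro n
  induction n using Nat.strong_induction_on with
  | _ n ih =>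
    intro α _ hn h2 G hP hG hGc
    rcases eq_or_lt_of_le h2 with h2' | h3
    · obtain ⟨x, y, hxy, hU⟩ := Nat.card_eq_two_iff.mp (hn.trans h2'.symm)
      have hall : ∀ z : α, z = x ∨ z = y := by
        intro z
        have : z ∈ ({x, y} : Set α) := hU ▸ Set.mem_univ z
        simpa using this
      by_cases hadj : G.Adj x y
      · refine hxy (eq_of_isolated (G := Gᶜ) ?_ (hGc.preconnected x y))
        intro z hz
        rcases hall z with rfl | rfl
        · exact hz.ne rfl
        · exact hz.2 hadj
      · refine hxy (eq_of_isolated (G := G) ?_ (hG.preconnected x y))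
        intro z hz
        rcases hall z with rfl | rfl
        · exact hz.ne rfl
        · exact hadj hz
    · have hnt : Nontrivial α := Finite.one_lt_card_iff_nontrivial.mp (by omega)
      obtain ⟨v⟩ := (inferInstance : Nonempty α)
      have hSeq : {u : α | u ≠ v} = Set.univ \ {v} := by ext u; simp
      have hfin : (Set.univ : Set α).Finite := Set.finite_univ
      have hcard : Nat.card ↥{u : α | u ≠ v} = n - 1 := by
        rw [Nat.card_coe_set_eq, hSeq]
        have h1 := Set.ncard_diff_singleton_add_one (Set.mem_univ v) hfin
        have h2 : (Set.univ : Set α).ncard = n := by rw [Set.ncard_univ]; exact hn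
        omega
      have hne : Nonempty ↥{u : α | u ≠ v} := by
        obtain ⟨u, hu⟩ := exists_ne v
        exact ⟨⟨u, hu⟩⟩
      by_cases hHc : (G.induce {u : α | u ≠ v}).Connected
      · by_cases hHcc : (G.induce {u : α | u ≠ v})ᶜ.Connected
        · rw [compl_induce] at hHcc
          exact ih (n - 1) (by omega) ↥{u : α | u ≠ v} hcard (by omega)
            (G.induce {u : α | u ≠ v})
            (p4free_of_embedding (SimpleGraph.Embedding.induce {u : α | u ≠ v}) hP)
            hHc (by rwa [compl_induce])
        · refine core (p4free_compl hP) hGc (by rwa [compl_compl]) v ?_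
          rw [← compl_induce]
          exact not_connected_exists hHcc
      · exact core hP hG hGc v (not_connected_exists hHc)
  

def isoCompl {α β : Type*} {G : SimpleGraph α} {H : SimpleGraph β} (e : G ≃g H) : Gᶜ ≃g Hᶜ where
  toEquiv := e.toEquiv
  map_rel_iff' := by
    intro a b
    simp only [compl_adj]
    exact and_congr e.toEquiv.injective.ne_iff (not_congr e.map_rel_iff)

def isoSumCongr {α₁ β₁ α₂ β₂ : Type*} {G₁ : SimpleGraph α₁} {H₁ : SimpleGraph β₁}
    {G₂ : SimpleGraph α₂} {H₂ : SimpleGraph β₂} (e₁ : G₁ ≃g H₁) (e₂ : G₂ ≃g H₂) :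
    (G₁ ⊕g G₂) ≃g (H₁ ⊕g H₂) where
  toEquiv := Equiv.sumCongr e₁.toEquiv e₂.toEquiv
  map_rel_iff' := by
    intro u v
    cases u <;> cases v <;> simp [e₁.map_rel_iff, e₂.map_rel_iff]

def decompIso {α : Type*} (G : SimpleGraph α) (S : Set α) [DecidablePred (· ∈ S)]
    (h : ∀ x y, x ∈ S → y ∉ S → ¬ G.Adj x y) :
    G ≃g (G.induce S ⊕g G.induce (Sᶜ : Set α)) where
  toEquiv := (Equiv.Set.sumCompl S).symm
  map_rel_iff' := by
    intro a b
    by_cases ha : a ∈ S <;> by_cases hb : b ∈ S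
    · rw [Equiv.Set.sumCompl_symm_apply_of_mem ha, Equiv.Set.sumCompl_symm_apply_of_mem hb]
      simp
    · rw [Equiv.Set.sumCompl_symm_apply_of_mem ha, Equiv.Set.sumCompl_symm_apply_of_notMem hb]
      simp [h a b ha hb]
    · rw [Equiv.Set.sumCompl_symm_apply_of_notMem ha, Equiv.Set.sumCompl_symm_apply_of_mem hb]
      have hnadj : ¬ G.Adj a b := fun h' => h b a hb ha h'.symm
      simp [hnadj]
    · rw [Equiv.Set.sumCompl_symm_apply_of_notMem ha, Equiv.Set.sumCompl_symm_apply_of_notMem hb]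
      simp

lemma build : ∀ (n : ℕ) (α : Type) [Finite α] [Nonempty α] (G : SimpleGraph α),
    Nat.card α = n → P4Free G → IsCograph G := by
  intro n
  induction n using Nat.strong_induction_on with
  | _ n ih =>
    intro α _ _ G hn hP
    classical
    rcases le_or_gt (Nat.card α) 1 with h1 | h2
    · have hpos : 0 < Nat.card α := Nat.card_pos
      obtain ⟨hsub, -⟩ := Nat.card_eq_one_iff_unique.mp (le_antisymm h1 hpos)
      haveI : Unique α := uniqueOfSubsingleton (Classical.arbitrary α)
      refine ⟨PUnit, ⊥, IsCographAux.single, ⟨?_⟩⟩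
      exact { toEquiv := Equiv.equivPUnit α
              map_rel_iff' := fun {a b} => iff_of_false (by simp)
                (fun h' => h'.ne (Subsingleton.elim a b)) }
    · have hkey : ¬ G.Connected ∨ ¬ Gᶜ.Connected := by
        by_contra hcon
        push_neg at hcon
        exact key (Nat.card α) α rfl h2 G hP hcon.1 hcon.2
      have hcardlt : ∀ S : Set α, Sᶜ.Nonempty → Nat.card ↥S < n := by
        intro S hS
        rw [Nat.card_coe_set_eq]
        have hss : S ⊂ Set.univ := Set.ssubset_univ_iff.mpr (by
          intro h
          obtain ⟨x, hx⟩ := hS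
          exact hx (h ▸ Set.mem_univ x))
        calc S.ncard < (Set.univ : Set α).ncard := Set.ncard_lt_ncard hss Set.finite_univ
          _ = n := by rw [Set.ncard_univ]; exact hn
      rcases hkey with hd | hd
      · obtain ⟨a, b, hr⟩ := not_connected_exists hd
        have hbS : b ∉ {w | G.Reachable a w} := hr
        have hcross : ∀ x y, x ∈ {w | G.Reachable a w} → y ∉ {w | G.Reachable a w} →
            ¬ G.Adj x y := fun x y hx hy hadj => hy (hx.trans hadj.reachable)
        haveI : Nonempty ↥{w | G.Reachable a w} := ⟨⟨a, SimpleGraph.Reachable.refl a⟩⟩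
        haveI : Nonempty ↥({w | G.Reachable a w}ᶜ) := ⟨⟨b, hbS⟩⟩
        obtain ⟨W₁, H₁, a₁, ⟨e₁⟩⟩ := ih _ (hcardlt _ ⟨b, hbS⟩) ↥{w | G.Reachable a w}
          (G.induce _) rfl (p4free_of_embedding (SimpleGraph.Embedding.induce _) hP)
        obtain ⟨W₂, H₂, a₂, ⟨e₂⟩⟩ := ih _ (hcardlt _ (by
            rw [compl_compl]; exact ⟨a, SimpleGraph.Reachable.refl a⟩))
          ↥({w | G.Reachable a w}ᶜ)
          (G.induce _) rfl (p4free_of_embedding (SimpleGraph.Embedding.induce _) hP)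
        exact ⟨W₁ ⊕ W₂, H₁ ⊕g H₂, IsCographAux.parallel a₁ a₂,
          ⟨(decompIso G _ hcross).trans (isoSumCongr e₁ e₂)⟩⟩
      · obtain ⟨a, b, hr⟩ := not_connected_exists hd
        have hbS : b ∉ {w | Gᶜ.Reachable a w} := hr
        have hcross : ∀ x y, x ∈ {w | Gᶜ.Reachable a w} → y ∉ {w | Gᶜ.Reachable a w} →
            ¬ Gᶜ.Adj x y := fun x y hx hy hadj => hy (hx.trans hadj.reachable)
        haveI : Nonempty ↥{w | Gᶜ.Reachable a w} := ⟨⟨a, SimpleGraph.Reachable.refl a⟩⟩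
        haveI : Nonempty ↥({w | Gᶜ.Reachable a w}ᶜ) := ⟨⟨b, hbS⟩⟩
        obtain ⟨W₁, H₁, a₁, ⟨e₁⟩⟩ := ih _ (hcardlt _ ⟨b, hbS⟩) ↥{w | Gᶜ.Reachable a w}
          (G.induce _) rfl (p4free_of_embedding (SimpleGraph.Embedding.induce _) hP)
        obtain ⟨W₂, H₂, a₂, ⟨e₂⟩⟩ := ih _ (hcardlt _ (by
            rw [compl_compl]; exact ⟨a, SimpleGraph.Reachable.refl a⟩))
          ↥({w | Gᶜ.Reachable a w}ᶜ)
          (G.induce _) rfl (p4free_of_embedding (SimpleGraph.Embedding.induce _) hP)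
        have key_iso : G ≃g ((G.induce {w | Gᶜ.Reachable a w})ᶜ ⊕g
            (G.induce ({w | Gᶜ.Reachable a w}ᶜ))ᶜ)ᶜ := by
          rw [compl_induce G {w | Gᶜ.Reachable a w}, compl_induce G ({w | Gᶜ.Reachable a w}ᶜ)]
          have h := isoCompl (decompIso Gᶜ _ hcross)
          rwa [compl_compl] at h
        exact ⟨W₁ ⊕ W₂, (H₁ᶜ ⊕g H₂ᶜ)ᶜ, IsCographAux.series a₁ a₂,
          ⟨key_iso.trans (isoCompl (isoSumCongr (isoCompl e₁) (isoCompl e₂)))⟩⟩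


lemma p4free_of_cographAux : ∀ {W : Type} {H : SimpleGraph W}, IsCographAux H → P4Free H := by
  intro W H h
  induction h with
  | single => exact fun a b c d h' => h'.1 (Subsingleton.elim a b)
  | parallel h1 h2 ih1 ih2 => exact p4free_sum ih1 ih2
  | series h1 h2 ih1 ih2 =>
      exact p4free_compl (p4free_sum (p4free_compl ih1) (p4free_compl ih2))

end Scratch

theorem stmt6 {V : Type} [Finite V] [Nonempty V] (G : SimpleGraph V) :
    IsCograph G ↔ P4Free G := by
  constructor
  · rintro ⟨W, H, haux, ⟨e⟩⟩
    exact Scratch.p4free_of_embedding e.toEmbedding (Scratch.p4free_of_cographAux haux)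
  · exact fun hP => Scratch.build (Nat.card V) V G rfl hP
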